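/- With the normal form w_g of g ∈ K as defined (w_g = w_g^Δ · w_g^{(1)} ⋯ w_g^{(n−1)}), the word length of w_g satisfies |w_g| ≤ 3·|g|_X, where |g|_X is the word length of g with respect to the generating set X = {x_j^{(α)}}. -/

import Mathlib

section
variable (n r : ℕ)

/-- The direct product of `n` copies of the free group of rank `r`. -/
abbrev Gnr := Fin n → FreeGroup (Fin r)

/-- `ℤ^r`, written multiplicatively. -/
abbrev Zr (r : ℕ) := Multiplicative (Fin r → ℤ)

/-- The homomorphism `F_r → ℤ^r` sending the `j`-th generator to the `j`-th basis vector. -/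
def φr : FreeGroup (Fin r) →* Zr r :=
  FreeGroup.lift (fun j => Multiplicative.ofAdd (Pi.single j 1))

/-- The homomorphism `ψ : F_r^{(1)} × ⋯ × F_r^{(n)} → ℤ^r` with `ψ(a_j^{(α)}) = e_j`. -/
def ψnr : Gnr n r →* Zr r :=
  ∏ α : Fin n, (φr r).comp (Pi.evalMonoidHom (fun _ => FreeGroup (Fin r)) α)

variable {n} in
/-- The inclusion of the `α`-th factor into the direct product. -/
def ins (α : Fin n) : FreeGroup (Fin r) →* Gnr n r :=
  MonoidHom.mulSingle (fun _ => FreeGroup (Fin r)) α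

end

/-- The last index, corresponding to the `n`-th factor. -/
def lastIdx {n : ℕ} (hn : 0 < n) : Fin n := ⟨n - 1, by omega⟩

/-- The generators `x_j^{(α)} = a_j^{(α)} (a_j^{(n)})⁻¹` of the kernel. -/
def xg {n r : ℕ} (hn : 0 < n) (α : Fin n) (j : Fin r) : Gnr n r :=
  ins r α (FreeGroup.of j) * (ins r (lastIdx hn) (FreeGroup.of j))⁻¹

/-- The free group on the generating set `X = {x_j^{(α)} : α ≤ n−1, j ≤ r}` of `K`. -/
abbrev FX (n r : ℕ) := FreeGroup (Fin (n - 1) × Fin r)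

/-- Evaluation of words in the letters `X` in the ambient direct product. -/
def evX (n r : ℕ) (hn : 2 ≤ n) : FX n r →* Gnr n r :=
  FreeGroup.lift (fun p => xg (by omega) ⟨p.1.1, by omega⟩ p.2)

/-- The inclusion of words in the letters `x_1^{(i)},…,x_r^{(i)}` into `F(X)`. -/
def insL {n r : ℕ} (i : Fin (n - 1)) : FreeGroup (Fin r) →* FX n r :=
  FreeGroup.lift (fun j => FreeGroup.of (i, j))

/-- The inclusion of words in the diagonal letters `Δ = (x_1^{(1)},…,x_r^{(r)})`
into `F(X)`. -/
def insD (n r : ℕ) (hrn : r + 2 ≤ n) : FreeGroup (Fin r) →* FX n r :=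
  FreeGroup.lift (fun j => FreeGroup.of (⟨j.1, by omega⟩, j))

namespace NFaux

open FreeGroup

variable {β γ : Type*} [DecidableEq β] [DecidableEq γ]

lemma norm_list_prod_le (L : List (FreeGroup β)) :
    L.prod.norm ≤ (L.map FreeGroup.norm).sum := by
  induction L with
  | nil => simp [FreeGroup.norm_one]
  | cons a L ih =>
      simp only [List.prod_cons, List.map_cons, List.sum_cons]
      exact (FreeGroup.norm_mul_le _ _).trans (Nat.add_le_add_left ih _)

lemma sum_norm_lift_mk_le {ι : Type*} [Fintype ι] (f : ι → β → FreeGroup γ)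
    (h : ∀ b, ∑ i, (f i b).norm ≤ 1) (L : List (β × Bool)) :
    (∑ i, (FreeGroup.lift (f i) (FreeGroup.mk L)).norm) ≤ L.length := by
  induction L with
  | nil =>
      simp [← FreeGroup.one_eq_mk]
  | cons p L ih =>
      have hsplit : FreeGroup.mk (p :: L) = FreeGroup.mk [p] * FreeGroup.mk L := by
        rw [FreeGroup.mul_mk]; rfl
      have h1 : (∑ i, (FreeGroup.lift (f i) (FreeGroup.mk [p])).norm) ≤ 1 := by
        obtain ⟨b, bb⟩ := p
        cases bb
        · have hb : FreeGroup.mk [(b, false)] = (FreeGroup.of b)⁻¹ := rfl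
          simpa [hb, FreeGroup.norm_inv_eq, FreeGroup.lift_apply_of] using h b
        · have hb : FreeGroup.mk [(b, true)] = FreeGroup.of b := rfl
          simpa [hb, FreeGroup.lift_apply_of] using h b
      calc (∑ i, (FreeGroup.lift (f i) (FreeGroup.mk (p :: L))).norm)
          ≤ ∑ i, ((FreeGroup.lift (f i) (FreeGroup.mk [p])).norm
              + (FreeGroup.lift (f i) (FreeGroup.mk L)).norm) := by
            refine Finset.sum_le_sum fun i _ => ?_
            rw [hsplit, show (FreeGroup.lift (f i)) (FreeGroup.mk [p] * FreeGroup.mk L)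
              = (FreeGroup.lift (f i)) (FreeGroup.mk [p])
                * (FreeGroup.lift (f i)) (FreeGroup.mk L) from map_mul _ _ _]
            exact FreeGroup.norm_mul_le _ _
        _ = (∑ i, (FreeGroup.lift (f i) (FreeGroup.mk [p])).norm)
              + ∑ i, (FreeGroup.lift (f i) (FreeGroup.mk L)).norm := Finset.sum_add_distrib
        _ ≤ 1 + L.length := Nat.add_le_add h1 ih
        _ = (p :: L).length := by simp [Nat.add_comm]

lemma sum_norm_lift_le {ι : Type*} [Fintype ι] (f : ι → β → FreeGroup γ)
    (h : ∀ b, ∑ i, (f i b).norm ≤ 1) (x : FreeGroup β) :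
    (∑ i, (FreeGroup.lift (f i) x).norm) ≤ x.norm := by
  have := sum_norm_lift_mk_le f h x.toWord
  rwa [FreeGroup.mk_toWord] at this

lemma norm_lift_le (f : β → FreeGroup γ) (h : ∀ b, (f b).norm ≤ 1) (x : FreeGroup β) :
    (FreeGroup.lift f x).norm ≤ x.norm := by
  have := sum_norm_lift_le (ι := Unit) (fun _ => f) (by simpa using h) x
  simpa using this

lemma prod_ofFn_ite {M : Type*} [Monoid M] : ∀ {m : ℕ} (α : Fin m) (g : Fin m → M),
    (List.ofFn (fun i => if i = α then g i else 1)).prod = g α := by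
  intro m
  induction m with
  | zero => exact fun α => α.elim0
  | succ m ih =>
      intro α g
      rw [List.ofFn_succ, List.prod_cons]
      induction α using Fin.cases with
      | zero =>
          rw [if_pos rfl]
          have h1 : (fun i : Fin m => if Fin.succ i = (0 : Fin (m+1)) then g i.succ else 1)
              = fun _ => 1 := by
            funext i; rw [if_neg (Fin.succ_ne_zero i)]
          rw [h1]
          simp
      | succ β =>
          rw [if_neg (Fin.succ_ne_zero β).symm, one_mul]
          have h1 : (fun i : Fin m => if Fin.succ i = Fin.succ β then g i.succ else 1)
              = fun i : Fin m => if i = β then (fun i : Fin m => g i.succ) i else 1 := by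
            funext i
            simp [Fin.succ_inj]
          rw [h1, ih β (fun i => g i.succ)]

variable (n r : ℕ)

/-- Projection `F(X) → F_r` reading off the `α`-th component. -/
def Pl (α : Fin (n - 1)) : FX n r →* FreeGroup (Fin r) :=
  FreeGroup.lift (fun p => if p.1 = α then FreeGroup.of p.2 else 1)

/-- Projection `F(X) → F_r` reading off the last component. -/
def Plast : FX n r →* FreeGroup (Fin r) :=
  FreeGroup.lift (fun p => (FreeGroup.of p.2)⁻¹)

/-- Forgetting the index. -/
def qh : FX n r →* FreeGroup (Fin r) :=
  FreeGroup.lift (fun p => FreeGroup.of p.2)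

/-- Inverting each generator. -/
def sg (r : ℕ) : FreeGroup (Fin r) →* FreeGroup (Fin r) :=
  FreeGroup.lift (fun j => (FreeGroup.of j)⁻¹)

/-- Keeping only the letter with value `α`. -/
def rh (hrn : r + 2 ≤ n) (α : Fin (n - 1)) : FreeGroup (Fin r) →* FreeGroup (Fin r) :=
  FreeGroup.lift (fun j => if (⟨j.1, by omega⟩ : Fin (n - 1)) = α then FreeGroup.of j else 1)

variable {n r}

lemma evX_comp_eval (hrn : r + 2 ≤ n) (α : Fin (n - 1)) :
    (Pi.evalMonoidHom (fun _ : Fin n => FreeGroup (Fin r))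
        (⟨α.1, by omega⟩ : Fin n)).comp (evX n r (by exact le_of_add_le_right hrn)) = Pl n r α := by
  apply FreeGroup.ext_hom
  rintro ⟨i, j⟩
  simp only [MonoidHom.comp_apply, Pi.evalMonoidHom_apply, evX, Pl, FreeGroup.lift_apply_of,
    xg, ins, lastIdx, MonoidHom.mulSingle_apply, Pi.mul_apply, Pi.inv_apply,
    Pi.mulSingle_apply]
  have hα := α.isLt
  have hA : ((⟨(α : ℕ), by omega⟩ : Fin n) = ⟨n - 1, by omega⟩) = False := by
    simp only [Fin.mk.injEq, eq_iff_iff, iff_false]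
    omega
  simp only [hA, if_false, inv_one, mul_one]
  by_cases h : i = α
  · subst h
    rw [if_pos rfl, if_pos rfl]
  · have hB : ((⟨(α : ℕ), by omega⟩ : Fin n) = ⟨(i : ℕ), by omega⟩) = False := by
      simp only [Fin.mk.injEq, eq_iff_iff, iff_false]
      exact fun hh => h (Fin.ext hh.symm)
    simp only [hB, if_false, if_neg h]

lemma evX_comp_eval_last (hrn : r + 2 ≤ n) :
    (Pi.evalMonoidHom (fun _ : Fin n => FreeGroup (Fin r))
        (⟨n - 1, by omega⟩ : Fin n)).comp (evX n r (by exact le_of_add_le_right hrn)) = Plast n r := by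
  apply FreeGroup.ext_hom
  rintro ⟨i, j⟩
  simp only [MonoidHom.comp_apply, Pi.evalMonoidHom_apply, evX, Plast, FreeGroup.lift_apply_of,
    xg, ins, lastIdx, MonoidHom.mulSingle_apply, Pi.mul_apply, Pi.inv_apply,
    Pi.mulSingle_apply]
  have hi := i.isLt
  have hA : ((⟨n - 1, by omega⟩ : Fin n) = ⟨(i : ℕ), by omega⟩) = False := by
    simp only [Fin.mk.injEq, eq_iff_iff, iff_false]
    omega
  simp only [hA, if_false, if_pos trivial, one_mul]

lemma Pl_comp_insD (hrn : r + 2 ≤ n) (α : Fin (n - 1)) :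
    (Pl n r α).comp (insD n r hrn) = rh n r hrn α := by
  apply FreeGroup.ext_hom
  intro j
  simp only [MonoidHom.comp_apply, insD, Pl, rh, FreeGroup.lift_apply_of]

lemma Pl_insL (α i : Fin (n - 1)) (x : FreeGroup (Fin r)) :
    Pl n r α (insL i x) = if i = α then x else 1 := by
  by_cases h : i = α
  · subst h
    rw [if_pos rfl]
    have hcomp : (Pl n r i).comp (insL i) = MonoidHom.id _ := by
      apply FreeGroup.ext_hom
      intro j
      simp [Pl, insL, FreeGroup.lift_apply_of]
    exact DFunLike.congr_fun hcomp x
  · rw [if_neg h]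
    have hcomp : (Pl n r α).comp (insL i) = 1 := by
      apply FreeGroup.ext_hom
      intro j
      simp [Pl, insL, FreeGroup.lift_apply_of, h]
    exact DFunLike.congr_fun hcomp x

lemma Plast_comp_insD (hrn : r + 2 ≤ n) :
    (Plast n r).comp (insD n r hrn) = sg r := by
  apply FreeGroup.ext_hom
  intro j
  simp [Plast, insD, sg, FreeGroup.lift_apply_of]

lemma Plast_comp_insL (i : Fin (n - 1)) :
    (Plast n r).comp (insL (r := r) i) = sg r := by
  apply FreeGroup.ext_hom
  intro j
  simp [Plast, insL, sg, FreeGroup.lift_apply_of]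

lemma sg_sg (x : FreeGroup (Fin r)) : sg r (sg r x) = x := by
  have hcomp : (sg r).comp (sg r) = MonoidHom.id _ := by
    apply FreeGroup.ext_hom
    intro j
    simp [sg, FreeGroup.lift_apply_of]
  exact DFunLike.congr_fun hcomp x

lemma sg_comp_Plast : (sg r).comp (Plast n r) = qh n r := by
  apply FreeGroup.ext_hom
  rintro ⟨i, j⟩
  simp [sg, Plast, qh, FreeGroup.lift_apply_of]

lemma rh_commutator (hrn : r + 2 ≤ n) (α : Fin (n - 1)) (d : FreeGroup (Fin r))
    (hd : d ∈ commutator (FreeGroup (Fin r))) : rh n r hrn α d = 1 := by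
  set c : FreeGroup (Fin r) :=
    if h : (α : ℕ) < r then FreeGroup.of (⟨α.1, h⟩ : Fin r) else 1 with hc
  have hrange : ∀ x, rh n r hrn α x ∈ Subgroup.zpowers c := by
    have hle : (rh n r hrn α).range ≤ Subgroup.zpowers c := by
      rw [rh, FreeGroup.range_lift_eq_closure]
      refine (Subgroup.closure_le _).mpr ?_
      rintro y ⟨j, rfl⟩
      dsimp only
      split
      · rename_i hj
        have hv : (j : ℕ) = (α : ℕ) := congrArg Fin.val hj
        have hα : (α : ℕ) < r := hv ▸ j.isLt
        have hcj : c = FreeGroup.of j := by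
          rw [hc, dif_pos hα]
          congr 1
          exact Fin.ext hv.symm
        rw [← hcj]
        exact Subgroup.mem_zpowers c
      · exact Subgroup.one_mem _
    exact fun x => hle ⟨x, rfl⟩
  have hker : commutator (FreeGroup (Fin r)) ≤ (rh n r hrn α).ker := by
    rw [commutator_def, Subgroup.commutator_le]
    intro g1 _ g2 _
    rw [MonoidHom.mem_ker, map_commutatorElement, commutatorElement_eq_one_iff_commute]
    obtain ⟨k1, hk1⟩ := Subgroup.mem_zpowers_iff.mp (hrange g1)
    obtain ⟨k2, hk2⟩ := Subgroup.mem_zpowers_iff.mp (hrange g2)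
    rw [← hk1, ← hk2]
    exact (Commute.refl c).zpow_zpow k1 k2
  exact hker hd

end NFaux

open NFaux in
/-- The length bound on the normal form: if `w_g = w_g^Δ · w_g^{(1)} ⋯ w_g^{(n−1)}` is a
normal form of `g ∈ K` (diagonal part in the commutator subgroup), then its word length is
at most `3·|g|_X`, i.e. at most three times the length of any word `u` in the generators
`X` representing `g`. -/
theorem normal_form_length_bound (n r : ℕ) (hrn : r + 2 ≤ n)
    (g : Gnr n r) (hg : g ∈ (ψnr n r).ker)
    (d : FreeGroup (Fin r)) (ws : Fin (n - 1) → FreeGroup (Fin r))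
    (hd : d ∈ commutator (FreeGroup (Fin r)))
    (hrep : evX n r (by omega)
      (insD n r hrn d * (List.ofFn (fun i : Fin (n - 1) => insL i (ws i))).prod) = g)
    (u : FX n r) (hu : evX n r (by omega) u = g) :
    ((insD n r hrn d *
        (List.ofFn (fun i : Fin (n - 1) => insL i (ws i))).prod).toWord).length ≤
      3 * u.toWord.length := by
  classical
  set W : List (FX n r) := List.ofFn (fun i : Fin (n - 1) => insL i (ws i)) with hW
  set w : FX n r := insD n r hrn d * W.prod with hw
  have hwu : evX n r (by omega) w = evX n r (by omega) u := hrep.trans hu.symm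
  -- per-component equalities
  have hPl : ∀ α : Fin (n - 1), Pl n r α w = Pl n r α u := by
    intro α
    have h1 := DFunLike.congr_fun (evX_comp_eval hrn α) w
    have h2 := DFunLike.congr_fun (evX_comp_eval hrn α) u
    rw [MonoidHom.comp_apply] at h1 h2
    rw [← h1, ← h2, hwu]
  have hPlast : Plast n r w = Plast n r u := by
    have h1 := DFunLike.congr_fun (evX_comp_eval_last hrn) w
    have h2 := DFunLike.congr_fun (evX_comp_eval_last hrn) u
    rw [MonoidHom.comp_apply] at h1 h2
    rw [← h1, ← h2, hwu]
  -- the pieces are determined by `u`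
  have hws : ∀ α : Fin (n - 1), ws α = Pl n r α u := by
    intro α
    have h1 : Pl n r α w = rh n r hrn α d * ws α := by
      rw [hw, map_mul]
      congr 1
      · exact DFunLike.congr_fun (Pl_comp_insD hrn α) d
      · rw [hW, map_list_prod, List.map_ofFn]
        have : ((fun x => Pl n r α x) ∘ fun i : Fin (n - 1) => insL i (ws i))
            = fun i : Fin (n - 1) => if i = α then ws i else 1 := by
          funext i
          exact Pl_insL α i (ws i)
        rw [this, prod_ofFn_ite]
    rw [rh_commutator hrn α d hd, one_mul] at h1
    rw [← h1, hPl α]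
  have hdq : d * (List.ofFn ws).prod = qh n r u := by
    have h1 : Plast n r w = sg r (d * (List.ofFn ws).prod) := by
      rw [hw, map_mul, map_mul]
      congr 1
      · exact DFunLike.congr_fun (Plast_comp_insD hrn) d
      · rw [hW, map_list_prod, map_list_prod, List.map_ofFn, List.map_ofFn]
        refine congrArg List.prod (congrArg List.ofFn (funext fun i => ?_))
        exact DFunLike.congr_fun (Plast_comp_insL i) (ws i)
    have h2 := congrArg (sg r) (h1.symm.trans hPlast)
    rw [sg_sg] at h2
    rw [h2]
    exact DFunLike.congr_fun (sg_comp_Plast) u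
  -- length estimates
  have hsum : (∑ i : Fin (n - 1), (Pl n r i u).norm) ≤ u.norm := by
    have := sum_norm_lift_le
      (fun (i : Fin (n - 1)) (p : Fin (n - 1) × Fin r) =>
        if p.1 = i then FreeGroup.of p.2 else 1)
      (fun p => by
        have : ∀ i : Fin (n - 1),
            (if p.1 = i then FreeGroup.of p.2 else (1 : FreeGroup (Fin r))).norm
              = if p.1 = i then 1 else 0 := by
          intro i
          split <;> simp [FreeGroup.norm_of, FreeGroup.norm_one]
        simp only [this]
        rw [Finset.sum_ite_eq]
        simp) u
    simpa only [Pl] using this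
  have hs : (∑ i : Fin (n - 1), (ws i).norm) ≤ u.norm := by
    calc (∑ i : Fin (n - 1), (ws i).norm)
        = ∑ i : Fin (n - 1), (Pl n r i u).norm :=
          Finset.sum_congr rfl fun i _ => by rw [hws i]
      _ ≤ u.norm := hsum
  have hqu : (qh n r u).norm ≤ u.norm := by
    refine norm_lift_le _ (fun p => ?_) u
    simp [FreeGroup.norm_of]
  have hprodws : ((List.ofFn ws).prod).norm ≤ ∑ i : Fin (n - 1), (ws i).norm := by
    refine (norm_list_prod_le _).trans ?_
    rw [List.map_ofFn, List.sum_ofFn]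
    exact le_of_eq rfl
  have hd2 : d.norm ≤ u.norm + ∑ i : Fin (n - 1), (ws i).norm := by
    have hde : d = qh n r u * ((List.ofFn ws).prod)⁻¹ := eq_mul_inv_of_mul_eq hdq
    rw [hde]
    exact (FreeGroup.norm_mul_le _ _).trans
      (Nat.add_le_add hqu (by rw [FreeGroup.norm_inv_eq]; exact hprodws))
  have hlen1 : w.norm ≤ d.norm + ∑ i : Fin (n - 1), (ws i).norm := by
    rw [hw]
    refine (FreeGroup.norm_mul_le _ _).trans (Nat.add_le_add ?_ ?_)
    · refine norm_lift_le _ (fun j => ?_) d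
      simp [FreeGroup.norm_of]
    · refine (norm_list_prod_le _).trans ?_
      rw [hW, List.map_ofFn, List.sum_ofFn]
      refine Finset.sum_le_sum fun i _ => ?_
      refine norm_lift_le _ (fun j => ?_) (ws i)
      simp [FreeGroup.norm_of]
  show w.norm ≤ 3 * u.norm
  omega
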